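/- Let V be a vector space with Y: V → Hom(V, V((x))), 𝟏 ∈ V, 𝒟 ∈ End(V) satisfying 𝒟𝟏 = 0, Y(𝟏,x) = id, Y(v,x)𝟏 ∈ V[[x]] with lim_{x→0} Y(v,x)𝟏 = v, and [𝒟,Y(v,x)] = (d/dx)Y(v,x), and suppose for all u,v ∈ V there is a nonzero polynomial f(x₁,x₂) with f(x₁,x₂)Y(u,x₁)Y(v,x₂) = f(x₁,x₂)Y(v,x₂)Y(u,x₁). Then for all u,v ∈ V there is a nonnegative integer k such that (x₁−x₂)^k Y(u,x₁)Y(v,x₂) = (x₁−x₂)^k Y(v,x₂)Y(u,x₁), i.e., the usual weak commutativity (locality) holds. -/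

import Mathlib

/-- Multiplication of a two-variable formal series
`F ∈ V[[x₁^{±1},x₂^{±1}]]` (given by its coefficient function) by a polynomial
`f(x₁,x₂)`. -/
noncomputable def polyAct2 {V : Type*} [AddCommGroup V] [Module ℂ V]
    (f : MvPolynomial (Fin 2) ℂ) (F : ℤ → ℤ → V) : ℤ → ℤ → V :=
  fun a b => ∑ m ∈ f.support,
    MvPolynomial.coeff m f • F (a - (m 0 : ℤ)) (b - (m 1 : ℤ))

/-- Multiplication by `(x₁ − x₂)`. -/
noncomputable def locOp {V : Type*} [AddCommGroup V] (F : ℤ → ℤ → V) : ℤ → ℤ → V :=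
  fun a b => F (a - 1) b - F a (b - 1)

open MvPolynomial

namespace QLProof

variable {V : Type*} [AddCommGroup V] [Module ℂ V]


variable {V : Type*} [AddCommGroup V] [Module ℂ V]

lemma polyAct2_sum_subset (f : MvPolynomial (Fin 2) ℂ) {s : Finset (Fin 2 →₀ ℕ)}
    (hs : f.support ⊆ s) (F : ℤ → ℤ → V) (a b : ℤ) :
    polyAct2 f F a b = ∑ m ∈ s, MvPolynomial.coeff m f • F (a - (m 0 : ℤ)) (b - (m 1 : ℤ)) :=
  Finset.sum_subset hs (fun m _ hm => by
    rw [MvPolynomial.notMem_support_iff.mp hm, zero_smul])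

lemma polyAct2_monomial (m : Fin 2 →₀ ℕ) (c : ℂ) (F : ℤ → ℤ → V) (a b : ℤ) :
    polyAct2 (monomial m c) F a b = c • F (a - (m 0 : ℤ)) (b - (m 1 : ℤ)) := by
  by_cases hc : c = 0
  · simp [hc, polyAct2]
  · rw [polyAct2, support_monomial, if_neg hc, Finset.sum_singleton, coeff_monomial, if_pos rfl]

lemma polyAct2_add (f g : MvPolynomial (Fin 2) ℂ) (F : ℤ → ℤ → V) :
    polyAct2 (f + g) F = polyAct2 f F + polyAct2 g F := by
  funext a b
  have hs : (f + g).support ⊆ f.support ∪ g.support := support_add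
  rw [Pi.add_apply, Pi.add_apply, polyAct2_sum_subset (f+g) hs,
    polyAct2_sum_subset f (Finset.subset_union_left) ,
    polyAct2_sum_subset g (Finset.subset_union_right), ← Finset.sum_add_distrib]
  exact Finset.sum_congr rfl fun m _ => by rw [coeff_add, add_smul]

lemma polyAct2_addF (f : MvPolynomial (Fin 2) ℂ) (F G : ℤ → ℤ → V) :
    polyAct2 f (F + G) = polyAct2 f F + polyAct2 f G := by
  funext a b
  simp [polyAct2, smul_add, Finset.sum_add_distrib]

lemma polyAct2_mul (f g : MvPolynomial (Fin 2) ℂ) (F : ℤ → ℤ → V) :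
    polyAct2 (f * g) F = polyAct2 f (polyAct2 g F) := by
  induction f using MvPolynomial.induction_on' with
  | add p q hp hq => rw [add_mul, polyAct2_add, polyAct2_add, hp, hq]
  | monomial m c =>
    induction g using MvPolynomial.induction_on' with
    | add p q hp hq =>
      rw [mul_add, polyAct2_add, polyAct2_add, polyAct2_addF, hp, hq]
    | monomial n d =>
      funext a b
      rw [monomial_mul, polyAct2_monomial, polyAct2_monomial, polyAct2_monomial, mul_smul]
      have h0 : (((m+n) 0 : ℕ) : ℤ) = (m 0 : ℤ) + (n 0 : ℤ) := by
        rw [Finsupp.add_apply]; push_cast; ring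
      have h1 : (((m+n) 1 : ℕ) : ℤ) = (m 1 : ℤ) + (n 1 : ℤ) := by
        rw [Finsupp.add_apply]; push_cast; ring
      rw [h0, h1, sub_sub, sub_sub]

lemma polyAct2_one (F : ℤ → ℤ → V) : polyAct2 (1 : MvPolynomial (Fin 2) ℂ) F = F := by
  funext a b
  have : (1 : MvPolynomial (Fin 2) ℂ) = monomial 0 1 := by simp [MvPolynomial.monomial_zero']
  rw [this, polyAct2_monomial]
  simp

lemma polyAct2_neg (f : MvPolynomial (Fin 2) ℂ) (F : ℤ → ℤ → V) :
    polyAct2 (-f) F = - polyAct2 f F := by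
  funext a b
  simp [polyAct2, support_neg]

lemma polyAct2_sub (f g : MvPolynomial (Fin 2) ℂ) (F : ℤ → ℤ → V) :
    polyAct2 (f - g) F = polyAct2 f F - polyAct2 g F := by
  rw [sub_eq_add_neg, polyAct2_add, polyAct2_neg, sub_eq_add_neg]

lemma polyAct2_X0 (F : ℤ → ℤ → V) (a b : ℤ) :
    polyAct2 (X 0 : MvPolynomial (Fin 2) ℂ) F a b = F (a - 1) b := by
  rw [X, polyAct2_monomial]
  simp [Finsupp.single_apply]

lemma polyAct2_X1 (F : ℤ → ℤ → V) (a b : ℤ) :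
    polyAct2 (X 1 : MvPolynomial (Fin 2) ℂ) F a b = F a (b - 1) := by
  rw [X, polyAct2_monomial]
  simp [Finsupp.single_apply]

lemma locOp_eq (F : ℤ → ℤ → V) :
    locOp F = polyAct2 (X 0 - X 1 : MvPolynomial (Fin 2) ℂ) F := by
  funext a b
  rw [polyAct2_sub, locOp]
  simp [polyAct2_X0, polyAct2_X1]

lemma locOp_iterate (k : ℕ) (F : ℤ → ℤ → V) :
    locOp^[k] F = polyAct2 ((X 0 - X 1 : MvPolynomial (Fin 2) ℂ)^k) F := by
  induction k generalizing F with
  | zero => simp [polyAct2_one]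
  | succ k ih =>
    rw [Function.iterate_succ_apply, ih, locOp_eq, ← polyAct2_mul, ← pow_succ]




noncomputable def d1 (F : ℤ → ℤ → V) : ℤ → ℤ → V := fun a b => ((a : ℂ) + 1) • F (a + 1) b
noncomputable def d2 (F : ℤ → ℤ → V) : ℤ → ℤ → V := fun a b => ((b : ℂ) + 1) • F a (b + 1)

lemma d1_add (F G : ℤ → ℤ → V) : d1 (F + G) = d1 F + d1 G := by
  funext a b; simp [d1, smul_add]

lemma d2_add (F G : ℤ → ℤ → V) : d2 (F + G) = d2 F + d2 G := by
  funext a b; simp [d2, smul_add]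

lemma d1_polyAct2 (f : MvPolynomial (Fin 2) ℂ) (F : ℤ → ℤ → V) :
    d1 (polyAct2 f F) = polyAct2 (pderiv 0 f) F + polyAct2 f (d1 F) := by
  induction f using MvPolynomial.induction_on' with
  | add p q hp hq =>
    rw [polyAct2_add, d1_add, hp, hq, map_add, polyAct2_add, polyAct2_add]
    abel
  | monomial m c =>
    funext a b
    rw [pderiv_monomial]
    show ((a:ℂ)+1) • polyAct2 (monomial m c) F (a+1) b = _ + _
    rw [polyAct2_monomial, polyAct2_monomial, polyAct2_monomial]
    show _ = _ + c • d1 F (a - (m 0 : ℤ)) (b - (m 1 : ℤ))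
    rw [d1]
    have e1 : (((m - Finsupp.single 0 1 : Fin 2 →₀ ℕ)) 1 : ℕ) = m 1 := by
      rw [Finsupp.tsub_apply, Finsupp.single_apply]; simp
    rw [e1]
    rcases Nat.eq_zero_or_pos (m 0) with hp | hp
    · have e0 : ((m - Finsupp.single 0 1 : Fin 2 →₀ ℕ)) 0 = 0 := by
        rw [Finsupp.tsub_apply, Finsupp.single_apply, hp]; simp
      rw [e0, hp]
      simp only [Nat.cast_zero, sub_zero, mul_zero, zero_smul, zero_add, smul_smul]
      congr 1
      ring
    · have e0 : (((m - Finsupp.single 0 1 : Fin 2 →₀ ℕ)) 0 : ℕ) = m 0 - 1 := by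
        rw [Finsupp.tsub_apply, Finsupp.single_apply]; simp
      have e0' : ((((m - Finsupp.single 0 1 : Fin 2 →₀ ℕ)) 0 : ℕ) : ℤ) = (m 0 : ℤ) - 1 := by
        rw [e0]; omega
      rw [e0']
      have harg : a - ((m 0 : ℤ) - 1) = a - (m 0 : ℤ) + 1 := by ring
      have harg2 : a + 1 - (m 0 : ℤ) = a - (m 0 : ℤ) + 1 := by ring
      rw [harg, harg2]
      simp only [smul_smul]
      rw [← add_smul]
      congr 1
      push_cast
      ring

lemma d2_polyAct2 (f : MvPolynomial (Fin 2) ℂ) (F : ℤ → ℤ → V) :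
    d2 (polyAct2 f F) = polyAct2 (pderiv 1 f) F + polyAct2 f (d2 F) := by
  induction f using MvPolynomial.induction_on' with
  | add p q hp hq =>
    rw [polyAct2_add, d2_add, hp, hq, map_add, polyAct2_add, polyAct2_add]
    abel
  | monomial m c =>
    funext a b
    rw [pderiv_monomial]
    show ((b:ℂ)+1) • polyAct2 (monomial m c) F a (b+1) = _ + _
    rw [polyAct2_monomial, polyAct2_monomial, polyAct2_monomial]
    show _ = _ + c • d2 F (a - (m 0 : ℤ)) (b - (m 1 : ℤ))
    rw [d2]
    have e1 : (((m - Finsupp.single 1 1 : Fin 2 →₀ ℕ)) 0 : ℕ) = m 0 := by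
      rw [Finsupp.tsub_apply, Finsupp.single_apply]; simp
    rw [e1]
    rcases Nat.eq_zero_or_pos (m 1) with hp | hp
    · have e0 : ((m - Finsupp.single 1 1 : Fin 2 →₀ ℕ)) 1 = 0 := by
        rw [Finsupp.tsub_apply, Finsupp.single_apply, hp]; simp
      rw [e0, hp]
      simp only [Nat.cast_zero, sub_zero, mul_zero, zero_smul, zero_add, smul_smul]
      congr 1
      ring
    · have e0 : (((m - Finsupp.single 1 1 : Fin 2 →₀ ℕ)) 1 : ℕ) = m 1 - 1 := by
        rw [Finsupp.tsub_apply, Finsupp.single_apply]; simp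
      have e0' : ((((m - Finsupp.single 1 1 : Fin 2 →₀ ℕ)) 1 : ℕ) : ℤ) = (m 1 : ℤ) - 1 := by
        rw [e0]; omega
      rw [e0']
      have harg : b - ((m 1 : ℤ) - 1) = b - (m 1 : ℤ) + 1 := by ring
      have harg2 : b + 1 - (m 1 : ℤ) = b - (m 1 : ℤ) + 1 := by ring
      rw [harg, harg2]
      simp only [smul_smul]
      rw [← add_smul]
      congr 1
      push_cast
      ring



noncomputable def diag : MvPolynomial (Fin 2) ℂ →ₐ[ℂ] Polynomial ℂ :=
  aeval ![Polynomial.X, Polynomial.X]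

lemma diag_X (i : Fin 2) : diag (X i) = Polynomial.X := by
  fin_cases i <;> simp [diag]

lemma diag_C (a : ℂ) : diag (C a) = Polynomial.C a := by
  simp [diag, algHom_C, algebraMap_eq]

noncomputable def iota : Polynomial ℂ →ₐ[ℂ] MvPolynomial (Fin 2) ℂ :=
  Polynomial.aeval (X 1)

lemma tdvd (f : MvPolynomial (Fin 2) ℂ) :
    (X 0 - X 1 : MvPolynomial (Fin 2) ℂ) ∣ f - iota (diag f) := by
  induction f using MvPolynomial.induction_on with
  | C a =>
    have : iota (diag (C a)) = C a := by
      rw [diag_C]; simp [iota, algHom_C, algebraMap_eq]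
    rw [this, sub_self]
    exact dvd_zero _
  | add p q hp hq =>
    have : p + q - iota (diag (p + q)) = (p - iota (diag p)) + (q - iota (diag q)) := by
      rw [map_add, map_add]; ring
    rw [this]; exact dvd_add hp hq
  | mul_X p i hp =>
    have hXi : iota (diag (X i)) = X 1 := by rw [diag_X]; simp [iota]
    have key : p * X i - iota (diag (p * X i))
        = (p - iota (diag p)) * X i + iota (diag p) * (X i - X 1) := by
      rw [map_mul, map_mul, hXi]; ring
    rw [key]
    refine dvd_add (Dvd.dvd.mul_right hp _) (Dvd.dvd.mul_left ?_ _)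
    fin_cases i
    · exact dvd_refl _
    · simp

lemma extract (f : MvPolynomial (Fin 2) ℂ) (hf : f ≠ 0) :
    ∃ (k : ℕ) (g : MvPolynomial (Fin 2) ℂ), f = (X 0 - X 1)^k * g ∧ diag g ≠ 0 := by
  set e := MvPolynomial.finSuccEquiv ℂ 1
  have hT : e (X 0 - X 1) = Polynomial.X - Polynomial.C (X 0) := by
    rw [map_sub]
    rw [show ((X 1 : MvPolynomial (Fin 2) ℂ)) = X (Fin.succ 0) by rfl]
    rw [finSuccEquiv_X_zero, finSuccEquiv_X_succ]
  suffices H : ∀ (n : ℕ) (f : MvPolynomial (Fin 2) ℂ), f ≠ 0 → (e f).natDegree ≤ n →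
      ∃ (k : ℕ) (g : MvPolynomial (Fin 2) ℂ), f = (X 0 - X 1)^k * g ∧ diag g ≠ 0 by
    exact H (e f).natDegree f hf le_rfl
  intro n
  induction n with
  | zero =>
    intro f hf hle
    by_cases hd : diag f = 0
    · obtain ⟨g, hg⟩ : (X 0 - X 1 : MvPolynomial (Fin 2) ℂ) ∣ f := by
        have := tdvd f
        rwa [hd, map_zero, sub_zero] at this
      have hg0 : g ≠ 0 := by rintro rfl; rw [mul_zero] at hg; exact hf hg
      have heg : e g ≠ 0 := fun h => hg0 (by
        have := congrArg e.symm h; simpa using this)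
      have hmon : (Polynomial.X - Polynomial.C (X 0 : MvPolynomial (Fin 1) ℂ)).Monic :=
        Polynomial.monic_X_sub_C _
      have h1 : (e f).natDegree = 1 + (e g).natDegree := by
        rw [hg, map_mul, hT, hmon.natDegree_mul' heg, Polynomial.natDegree_X_sub_C]
      omega
    · exact ⟨0, f, by rw [pow_zero, one_mul], hd⟩
  | succ n ihn =>
    intro f hf hle
    by_cases hd : diag f = 0
    · obtain ⟨g, hg⟩ : (X 0 - X 1 : MvPolynomial (Fin 2) ℂ) ∣ f := by
        have := tdvd f
        rwa [hd, map_zero, sub_zero] at this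
      have hg0 : g ≠ 0 := by rintro rfl; rw [mul_zero] at hg; exact hf hg
      have heg : e g ≠ 0 := fun h => hg0 (by
        have := congrArg e.symm h; simpa using this)
      have hmon : (Polynomial.X - Polynomial.C (X 0 : MvPolynomial (Fin 1) ℂ)).Monic :=
        Polynomial.monic_X_sub_C _
      have h1 : (e f).natDegree = 1 + (e g).natDegree := by
        rw [hg, map_mul, hT, hmon.natDegree_mul' heg, Polynomial.natDegree_X_sub_C]
      obtain ⟨k, g0, hkg, hdg⟩ := ihn g hg0 (by omega)
      exact ⟨k + 1, g0, by rw [hg, hkg, pow_succ]; ring, hdg⟩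
    · exact ⟨0, f, by rw [pow_zero, one_mul], hd⟩


lemma diag_dsum (f : MvPolynomial (Fin 2) ℂ) :
    diag (pderiv 0 f + pderiv 1 f) = Polynomial.derivative (diag f) := by
  induction f using MvPolynomial.induction_on with
  | C a => simp [diag_C]
  | add p q hp hq =>
    rw [map_add (pderiv 0), map_add (pderiv 1)]
    rw [show pderiv 0 p + pderiv 0 q + (pderiv 1 p + pderiv 1 q)
      = (pderiv 0 p + pderiv 1 p) + (pderiv 0 q + pderiv 1 q) by ring]
    rw [map_add, hp, hq, map_add, map_add]
  | mul_X p i hp =>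
    rw [pderiv_mul, pderiv_mul]
    have hsum : pderiv 0 p * X i + p * pderiv 0 (X i) + (pderiv 1 p * X i + p * pderiv 1 (X i))
        = (pderiv 0 p + pderiv 1 p) * X i + p * (pderiv 0 (X i) + pderiv 1 (X i)) := by ring
    rw [hsum]
    have hXd : pderiv 0 (X i : MvPolynomial (Fin 2) ℂ) + pderiv 1 (X i) = 1 := by
      fin_cases i <;> simp [pderiv_X, Pi.single_apply]
    rw [hXd, mul_one, map_add]
    rw [map_mul diag p (X i), diag_X, Polynomial.derivative_mul, Polynomial.derivative_X, mul_one]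
    rw [map_mul diag _ (X i), diag_X, hp]

lemma dsum_t_pow (k : ℕ) :
    pderiv 0 ((X 0 - X 1 : MvPolynomial (Fin 2) ℂ)^k)
      + pderiv 1 ((X 0 - X 1 : MvPolynomial (Fin 2) ℂ)^k) = 0 := by
  induction k with
  | zero => simp
  | succ k ih =>
    rw [pow_succ, pderiv_mul, pderiv_mul]
    have ht : pderiv 0 (X 0 - X 1 : MvPolynomial (Fin 2) ℂ)
        + pderiv 1 (X 0 - X 1 : MvPolynomial (Fin 2) ℂ) = 0 := by
      simp [pderiv_X, Pi.single_apply]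
    have : pderiv 0 ((X 0 - X 1 : MvPolynomial (Fin 2) ℂ)^k) * (X 0 - X 1)
          + (X 0 - X 1 : MvPolynomial (Fin 2) ℂ)^k * pderiv 0 (X 0 - X 1)
          + (pderiv 1 ((X 0 - X 1 : MvPolynomial (Fin 2) ℂ)^k) * (X 0 - X 1)
          + (X 0 - X 1 : MvPolynomial (Fin 2) ℂ)^k * pderiv 1 (X 0 - X 1))
        = (pderiv 0 ((X 0 - X 1 : MvPolynomial (Fin 2) ℂ)^k)
          + pderiv 1 ((X 0 - X 1 : MvPolynomial (Fin 2) ℂ)^k)) * (X 0 - X 1)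
          + (X 0 - X 1 : MvPolynomial (Fin 2) ℂ)^k
            * (pderiv 0 (X 0 - X 1 : MvPolynomial (Fin 2) ℂ)
              + pderiv 1 (X 0 - X 1 : MvPolynomial (Fin 2) ℂ)) := by ring
    rw [this, ih, ht, zero_mul, mul_zero, add_zero]

lemma deg_zero_eq (m : Fin 2 →₀ ℕ) (h : m 0 + m 1 = 0) : m = 0 := by
  ext i
  fin_cases i <;> simp <;> omega

lemma approx (h : MvPolynomial (Fin 2) ℂ) (hc : MvPolynomial.coeff 0 h ≠ 0) (L : ℕ) :
    ∃ q ρ : MvPolynomial (Fin 2) ℂ, q * h = 1 + ρ ∧ ∀ m ∈ ρ.support, L ≤ m 0 + m 1 := by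
  induction L with
  | zero => exact ⟨0, -1, by ring, fun m _ => Nat.zero_le _⟩
  | succ L ihL =>
    obtain ⟨q, ρ, hq, hρ⟩ := ihL
    classical
    set c := MvPolynomial.coeff 0 h with hcdef
    set σ : MvPolynomial (Fin 2) ℂ :=
      ∑ m ∈ ρ.support.filter (fun m => m 0 + m 1 = L), monomial m (coeff m ρ) with hσ
    refine ⟨q - C c⁻¹ * σ, (q - C c⁻¹ * σ) * h - 1, by ring, ?_⟩
    have hCC : (C c⁻¹ : MvPolynomial (Fin 2) ℂ) * C c = 1 := by
      rw [← C_mul, inv_mul_cancel₀ hc, C_1]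
    have key : (q - C c⁻¹ * σ) * h - 1 = (ρ - σ) - C c⁻¹ * σ * (h - C c) := by
      linear_combination hq - σ * hCC
    rw [key]
    -- coefficient description of σ
    have hσc : ∀ m : Fin 2 →₀ ℕ, coeff m σ = if m 0 + m 1 = L then coeff m ρ else 0 := by
      intro m
      rw [hσ, coeff_sum]
      simp only [coeff_monomial]
      rw [Finset.sum_ite_eq' (ρ.support.filter (fun m => m 0 + m 1 = L)) m (fun m' => coeff m' ρ)]
      by_cases hmem : m ∈ ρ.support.filter (fun m => m 0 + m 1 = L)
      · rw [if_pos hmem]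
        rw [Finset.mem_filter] at hmem
        rw [if_pos hmem.2]
      · rw [if_neg hmem]
        rw [Finset.mem_filter] at hmem
        by_cases hdeg : m 0 + m 1 = L
        · rw [if_pos hdeg]
          by_cases hs : m ∈ ρ.support
          · exact absurd ⟨hs, hdeg⟩ hmem
          · exact (MvPolynomial.notMem_support_iff.mp hs).symm
        · rw [if_neg hdeg]
    intro m hm
    rw [MvPolynomial.mem_support_iff] at hm
    by_contra hLm
    push_neg at hLm
    -- m has degree ≤ L
    apply hm
    rw [MvPolynomial.coeff_sub]
    have h1 : coeff m (ρ - σ) = 0 := by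
      rw [MvPolynomial.coeff_sub, hσc m]
      by_cases hdeg : m 0 + m 1 = L
      · rw [if_pos hdeg]; ring
      · rw [if_neg hdeg]
        have : m ∉ ρ.support := fun hs => by
          have := hρ m hs
          omega
        rw [MvPolynomial.notMem_support_iff.mp this]
        ring
    have h2 : coeff m (C c⁻¹ * σ * (h - C c)) = 0 := by
      by_contra h2
      have hmem : m ∈ (C c⁻¹ * σ * (h - C c)).support := MvPolynomial.mem_support_iff.mpr h2
      have hsub := MvPolynomial.support_mul (C c⁻¹ * σ) (h - C c) hmem
      rw [Finset.mem_add] at hsub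
      obtain ⟨m1, hm1, m2, hm2, hm12⟩ := hsub
      have hsub1 := MvPolynomial.support_mul (C c⁻¹ : MvPolynomial (Fin 2) ℂ) σ hm1
      rw [Finset.mem_add] at hsub1
      obtain ⟨m0, hm0, m3, hm3, hm03⟩ := hsub1
      -- m0 = 0
      have hm00 : m0 = 0 := by
        rw [MvPolynomial.mem_support_iff, MvPolynomial.coeff_C] at hm0
        by_contra hne
        rw [if_neg (fun hh => hne hh.symm)] at hm0
        exact hm0 rfl
      -- σ support: degree L
      have hm3deg : m3 0 + m3 1 = L := by
        rw [MvPolynomial.mem_support_iff, hσc m3] at hm3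
        by_contra hne
        rw [if_neg hne] at hm3
        exact hm3 rfl
      -- h - C c : degree ≥ 1
      have hm2deg : 1 ≤ m2 0 + m2 1 := by
        by_contra hcon
        push_neg at hcon
        have : m2 = 0 := deg_zero_eq m2 (by omega)
        rw [MvPolynomial.mem_support_iff, this] at hm2
        apply hm2
        rw [MvPolynomial.coeff_sub, MvPolynomial.coeff_zero_C, hcdef]
        ring
      have e12 : m 0 + m 1 = (m1 0 + m1 1) + (m2 0 + m2 1) := by
        rw [← hm12]; simp [Finsupp.add_apply]; omega
      have e03 : m1 0 + m1 1 = (m0 0 + m0 1) + (m3 0 + m3 1) := by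
        rw [← hm03]; simp [Finsupp.add_apply]; omega
      have em0 : m0 0 + m0 1 = 0 := by rw [hm00]; simp
      omega
    rw [h1, h2]
    ring




-- truncation transfer
lemma trunc_low (f : MvPolynomial (Fin 2) ℂ) (A : ℤ → ℤ → V) (N : ℤ)
    (hA : ∀ b < N, ∀ a, A a b = 0) : ∀ b < N, ∀ a, polyAct2 f A a b = 0 := by
  intro b hb a
  apply Finset.sum_eq_zero
  intro m _
  rw [hA (b - (m 1 : ℤ)) (by have : (0:ℤ) ≤ (m 1 : ℤ) := Int.ofNat_nonneg _; omega) _,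
    smul_zero]

lemma trunc_row (f : MvPolynomial (Fin 2) ℂ) (A : ℤ → ℤ → V)
    (hA : ∀ b, ∃ N, ∀ a < N, A a b = 0) : ∀ b, ∃ N, ∀ a < N, polyAct2 f A a b = 0 := by
  intro b
  choose nA hnA using hA
  by_cases hs : f.support.Nonempty
  · refine ⟨(f.support.image (fun m => nA (b - (m 1 : ℤ)))).min' (hs.image _), fun a ha => ?_⟩
    apply Finset.sum_eq_zero
    intro m hm
    have hle : (f.support.image (fun m => nA (b - (m 1 : ℤ)))).min'  (hs.image _)
        ≤ nA (b - (m 1 : ℤ)) :=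
      Finset.min'_le _ _ (Finset.mem_image_of_mem _ hm)
    rw [hnA (b - (m 1 : ℤ)) (a - (m 0 : ℤ))
      (by have : (0:ℤ) ≤ (m 0 : ℤ) := Int.ofNat_nonneg _; omega), smul_zero]
  · rw [Finset.not_nonempty_iff_eq_empty] at hs
    exact ⟨0, fun a _ => by rw [polyAct2, hs, Finset.sum_empty]⟩

-- symmetric versions (swap roles of variables)
lemma trunc_low' (f : MvPolynomial (Fin 2) ℂ) (B : ℤ → ℤ → V) (N : ℤ)
    (hB : ∀ a < N, ∀ b, B a b = 0) : ∀ a < N, ∀ b, polyAct2 f B a b = 0 := by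
  intro a ha b
  apply Finset.sum_eq_zero
  intro m _
  rw [hB (a - (m 0 : ℤ)) (by have : (0:ℤ) ≤ (m 0 : ℤ) := Int.ofNat_nonneg _; omega) _,
    smul_zero]

lemma trunc_col (f : MvPolynomial (Fin 2) ℂ) (B : ℤ → ℤ → V)
    (hB : ∀ a, ∃ N, ∀ b < N, B a b = 0) : ∀ a, ∃ N, ∀ b < N, polyAct2 f B a b = 0 := by
  intro a
  choose nB hnB using hB
  by_cases hs : f.support.Nonempty
  · refine ⟨(f.support.image (fun m => nB (a - (m 0 : ℤ)))).min' (hs.image _), fun b hb => ?_⟩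
    apply Finset.sum_eq_zero
    intro m hm
    have hle : (f.support.image (fun m => nB (a - (m 0 : ℤ)))).min' (hs.image _)
        ≤ nB (a - (m 0 : ℤ)) :=
      Finset.min'_le _ _ (Finset.mem_image_of_mem _ hm)
    rw [hnB (a - (m 0 : ℤ)) (b - (m 1 : ℤ))
      (by have : (0:ℤ) ≤ (m 1 : ℤ) := Int.ofNat_nonneg _; omega), smul_zero]
  · rw [Finset.not_nonempty_iff_eq_empty] at hs
    exact ⟨0, fun b _ => by rw [polyAct2, hs, Finset.sum_empty]⟩




lemma cancel (h : MvPolynomial (Fin 2) ℂ) (hc : MvPolynomial.coeff 0 h ≠ 0)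
    (A B : ℤ → ℤ → V)
    (hA1 : ∃ N, ∀ b < N, ∀ a, A a b = 0) (hA2 : ∀ b, ∃ N, ∀ a < N, A a b = 0)
    (hB1 : ∃ N, ∀ a < N, ∀ b, B a b = 0) (hB2 : ∀ a, ∃ N, ∀ b < N, B a b = 0)
    (hEq : polyAct2 h A = polyAct2 h B) : A = B := by
  funext a b
  obtain ⟨NA, hNA⟩ := hA1
  obtain ⟨NB, hNB⟩ := hB1
  choose nA hnA using hA2
  choose nB hnB using hB2
  have hAkill : ∃ LA : ℕ, ∀ m : Fin 2 →₀ ℕ, LA ≤ m 0 + m 1 →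
      A (a - (m 0 : ℤ)) (b - (m 1 : ℤ)) = 0 := by
    by_cases hb : b < NA
    · exact ⟨0, fun m _ => hNA _ (by
        have : (0:ℤ) ≤ (m 1 : ℤ) := Int.ofNat_nonneg _
        omega) _⟩
    · push_neg at hb
      have hne : ((Finset.Icc NA b).image nA).Nonempty :=
        Finset.Nonempty.image ⟨NA, Finset.mem_Icc.mpr ⟨le_rfl, hb⟩⟩ _
      set P := ((Finset.Icc NA b).image nA).min' hne with hP
      refine ⟨((b - NA).toNat + (a - P + 1).toNat), fun m hm => ?_⟩
      by_cases hrow : b - (m 1 : ℤ) < NA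
      · exact hNA _ hrow _
      · push_neg at hrow
        have hrmem : b - (m 1 : ℤ) ∈ Finset.Icc NA b := Finset.mem_Icc.mpr ⟨hrow, by
          have : (0:ℤ) ≤ (m 1 : ℤ) := Int.ofNat_nonneg _
          omega⟩
        have hPle : P ≤ nA (b - (m 1 : ℤ)) :=
          Finset.min'_le _ _ (Finset.mem_image_of_mem nA hrmem)
        apply hnA
        omega
  have hBkill : ∃ LB : ℕ, ∀ m : Fin 2 →₀ ℕ, LB ≤ m 0 + m 1 →
      B (a - (m 0 : ℤ)) (b - (m 1 : ℤ)) = 0 := by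
    by_cases ha : a < NB
    · exact ⟨0, fun m _ => hNB _ (by
        have : (0:ℤ) ≤ (m 0 : ℤ) := Int.ofNat_nonneg _
        omega) _⟩
    · push_neg at ha
      have hne : ((Finset.Icc NB a).image nB).Nonempty :=
        Finset.Nonempty.image ⟨NB, Finset.mem_Icc.mpr ⟨le_rfl, ha⟩⟩ _
      set P := ((Finset.Icc NB a).image nB).min' hne with hP
      refine ⟨((a - NB).toNat + (b - P + 1).toNat), fun m hm => ?_⟩
      by_cases hcol : a - (m 0 : ℤ) < NB
      · exact hNB _ hcol _
      · push_neg at hcol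
        have hcmem : a - (m 0 : ℤ) ∈ Finset.Icc NB a := Finset.mem_Icc.mpr ⟨hcol, by
          have : (0:ℤ) ≤ (m 0 : ℤ) := Int.ofNat_nonneg _
          omega⟩
        have hPle : P ≤ nB (a - (m 0 : ℤ)) :=
          Finset.min'_le _ _ (Finset.mem_image_of_mem nB hcmem)
        apply hnB
        omega
  obtain ⟨LA, hLA⟩ := hAkill
  obtain ⟨LB, hLB⟩ := hBkill
  obtain ⟨q, ρ, hqh, hρ⟩ := approx h hc (max LA LB)
  have h1 : polyAct2 (q * h) A = polyAct2 (q * h) B := by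
    rw [polyAct2_mul, polyAct2_mul, hEq]
  rw [hqh, polyAct2_add, polyAct2_add, polyAct2_one, polyAct2_one] at h1
  have h2 := congrFun (congrFun h1 a) b
  have hzA : polyAct2 ρ A a b = 0 := by
    apply Finset.sum_eq_zero
    intro m hm
    rw [hLA m (le_trans (le_max_left _ _) (hρ m hm)), smul_zero]
  have hzB : polyAct2 ρ B a b = 0 := by
    apply Finset.sum_eq_zero
    intro m hm
    rw [hLB m (le_trans (le_max_right _ _) (hρ m hm)), smul_zero]
  have h3 : A a b + polyAct2 ρ A a b = B a b + polyAct2 ρ B a b := h2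
  rw [hzA, hzB, add_zero, add_zero] at h3
  exact h3





lemma closure (Y : V →ₗ[ℂ] V →ₗ[ℂ] (ℤ → V)) (D : Module.End ℂ V)
    (hDb : ∀ (v u : V) (n : ℤ),
      D (Y v u n) - Y v (D u) n = ((n : ℂ) + 1) • Y v u (n + 1))
    (u v : V) (f : MvPolynomial (Fin 2) ℂ)
    (hf : ∀ w : V, polyAct2 f (fun a b => Y u (Y v w b) a)
        = polyAct2 f (fun a b => Y v (Y u w a) b)) :
    ∀ w : V, polyAct2 (pderiv 0 f + pderiv 1 f) (fun a b => Y u (Y v w b) a)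
        = polyAct2 (pderiv 0 f + pderiv 1 f) (fun a b => Y v (Y u w a) b) := by
  intro w
  set F : V → ℤ → ℤ → V := fun w a b => Y u (Y v w b) a with hF
  set G : V → ℤ → ℤ → V := fun w a b => Y v (Y u w a) b with hG
  have hDY : ∀ (x z : V) (n : ℤ), D (Y x z n) = Y x (D z) n + ((n : ℂ) + 1) • Y x z (n + 1) := by
    intro x z n
    have := hDb x z n
    linear_combination (norm := module) this
  have hDF : ∀ w : V, (fun a b => D (F w a b)) = F (D w) + d1 (F w) + d2 (F w) := by
    intro w
    funext a b
    show D (Y u (Y v w b) a) = _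
    rw [hDY u (Y v w b) a, hDY v w b]
    have : Y u (Y v (D w) b + ((b : ℂ) + 1) • Y v w (b + 1)) a
        = Y u (Y v (D w) b) a + ((b : ℂ) + 1) • Y u (Y v w (b + 1)) a := by
      rw [map_add, map_smul]
      rfl
    rw [this]
    show _ = F (D w) a b + d1 (F w) a b + d2 (F w) a b
    rw [hF]
    simp only [d1, d2]
    all_goals abel
  have hDG : ∀ w : V, (fun a b => D (G w a b)) = G (D w) + d1 (G w) + d2 (G w) := by
    intro w
    funext a b
    show D (Y v (Y u w a) b) = _
    rw [hDY v (Y u w a) b, hDY u w a]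
    have : Y v (Y u (D w) a + ((a : ℂ) + 1) • Y u w (a + 1)) b
        = Y v (Y u (D w) a) b + ((a : ℂ) + 1) • Y v (Y u w (a + 1)) b := by
      rw [map_add, map_smul]
      rfl
    rw [this]
    show _ = G (D w) a b + d1 (G w) a b + d2 (G w) a b
    rw [hG]
    simp only [d1, d2]
    all_goals abel
  have hcomm : ∀ (X : ℤ → ℤ → V), (fun a b => D (polyAct2 f X a b))
      = polyAct2 f (fun a b => D (X a b)) := by
    intro X
    funext a b
    rw [polyAct2, polyAct2, map_sum]
    exact Finset.sum_congr rfl fun m _ => by rw [map_smul]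
  have E1 : polyAct2 f (fun a b => D (F w a b)) = polyAct2 f (fun a b => D (G w a b)) := by
    rw [← hcomm, ← hcomm]
    funext a b
    rw [hf w]
  rw [hDF w, hDG w, polyAct2_addF, polyAct2_addF, polyAct2_addF, polyAct2_addF, hf (D w)] at E1
  have E2 : polyAct2 f (d1 (F w)) + polyAct2 f (d2 (F w))
      = polyAct2 f (d1 (G w)) + polyAct2 f (d2 (G w)) := by
    have E1' : polyAct2 f (G (D w)) + polyAct2 f (d1 (F w)) + polyAct2 f (d2 (F w))
        = polyAct2 f (G (D w)) + polyAct2 f (d1 (G w)) + polyAct2 f (d2 (G w)) := E1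
    rw [add_assoc, add_assoc] at E1'
    exact add_left_cancel E1'
  have L1 : polyAct2 (pderiv 0 f + pderiv 1 f) (F w)
      = d1 (polyAct2 f (F w)) + d2 (polyAct2 f (F w))
        - (polyAct2 f (d1 (F w)) + polyAct2 f (d2 (F w))) := by
    rw [d1_polyAct2, d2_polyAct2, polyAct2_add]
    abel
  have L2 : polyAct2 (pderiv 0 f + pderiv 1 f) (G w)
      = d1 (polyAct2 f (G w)) + d2 (polyAct2 f (G w))
        - (polyAct2 f (d1 (G w)) + polyAct2 f (d2 (G w))) := by
    rw [d1_polyAct2, d2_polyAct2, polyAct2_add]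
    abel
  rw [L1, L2, hf w, E2]



lemma const_diag (g : MvPolynomial (Fin 2) ℂ) :
    (diag g).coeff 0 = MvPolynomial.coeff 0 g := by
  induction g using MvPolynomial.induction_on with
  | C a => rw [diag_C]; simp
  | add p q hp hq => rw [map_add, Polynomial.coeff_add, hp, hq, MvPolynomial.coeff_add]
  | mul_X p i hp =>
    rw [map_mul, diag_X, Polynomial.coeff_mul_X_zero]
    have : MvPolynomial.coeff 0 (p * X i) = constantCoeff (p * X i) := rfl
    rw [this, map_mul, constantCoeff_X, mul_zero]

lemma deriv_ne_zero (p : Polynomial ℂ) (hp : p.natDegree ≠ 0) :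
    Polynomial.derivative p ≠ 0 := by
  intro h
  have h1 : p ≠ 0 := fun h0 => hp (by simp [h0])
  have h2 := Polynomial.coeff_derivative p (p.natDegree - 1)
  rw [h, Polynomial.coeff_zero] at h2
  have h3 : p.natDegree - 1 + 1 = p.natDegree := by omega
  rw [h3] at h2
  have h4 : p.coeff p.natDegree ≠ 0 := Polynomial.coeff_ne_zero_of_eq_degree (by
    rw [Polynomial.degree_eq_natDegree h1])
  have h5 : ((p.natDegree - 1 : ℕ) : ℂ) + 1 ≠ 0 := by
    have : ((p.natDegree - 1 : ℕ) : ℂ) + 1 = ((p.natDegree - 1 + 1 : ℕ) : ℂ) := by push_cast; ring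
    rw [this, h3]
    exact_mod_cast hp
  exact h5 (by
    have := mul_eq_zero.mp h2.symm
    tauto)


lemma finish_step (Y : V →ₗ[ℂ] V →ₗ[ℂ] (ℤ → V))
    (htrunc : ∀ v u : V, ∃ N : ℤ, ∀ n < N, Y v u n = 0) (u v : V) (k : ℕ)
    (g : MvPolynomial (Fin 2) ℂ) (hc : MvPolynomial.coeff 0 g ≠ 0)
    (hrel : ∀ w : V, polyAct2 ((X 0 - X 1)^k * g) (fun a b => Y u (Y v w b) a)
        = polyAct2 ((X 0 - X 1)^k * g) (fun a b => Y v (Y u w a) b)) :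
    ∀ w : V, locOp^[k] (fun a b => Y u (Y v w b) a)
      = locOp^[k] (fun a b => Y v (Y u w a) b) := by
  intro w
  rw [locOp_iterate, locOp_iterate]
  apply cancel g hc
  · obtain ⟨N, hN⟩ := htrunc v w
    refine ⟨N, trunc_low _ _ N ?_⟩
    intro b hb a
    show Y u (Y v w b) a = 0
    rw [hN b hb, map_zero]
    rfl
  · apply trunc_row
    intro b
    obtain ⟨N, hN⟩ := htrunc u (Y v w b)
    exact ⟨N, fun a ha => hN a ha⟩
  · obtain ⟨N, hN⟩ := htrunc u w
    refine ⟨N, trunc_low' _ _ N ?_⟩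
    intro a ha b
    show Y v (Y u w a) b = 0
    rw [hN a ha, map_zero]
    rfl
  · apply trunc_col
    intro a
    obtain ⟨N, hN⟩ := htrunc v (Y u w a)
    exact ⟨N, fun b hb => hN b hb⟩
  · rw [← polyAct2_mul, ← polyAct2_mul, mul_comm]
    exact hrel w

end QLProof

open QLProof in
/-- `V` with `Y`, `𝟏`, `𝒟` as in the quasi-vertex-algebra setting
(vacuum, creation, `𝒟`-bracket; `Y v u n` is the coefficient of `x^n` in
`Y(v,x)u`), such that any pair of vertex operators is quasi local: for all
`u, v` there is a nonzero polynomial `f(x₁,x₂)` with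
`f(x₁,x₂)Y(u,x₁)Y(v,x₂) = f(x₁,x₂)Y(v,x₂)Y(u,x₁)`.  Then ordinary locality
holds: for all `u, v` there is `k ∈ ℕ` with
`(x₁−x₂)^k Y(u,x₁)Y(v,x₂) = (x₁−x₂)^k Y(v,x₂)Y(u,x₁)`.
Here `Y(u,x₁)Y(v,x₂)w` has coefficient of `x₁^a x₂^b` equal to
`Y u (Y v w b) a`. -/
theorem stmt_10 (V : Type*) [AddCommGroup V] [Module ℂ V]
    (Y : V →ₗ[ℂ] V →ₗ[ℂ] (ℤ → V)) (vone : V) (D : Module.End ℂ V)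
    (htrunc : ∀ v u : V, ∃ N : ℤ, ∀ n < N, Y v u n = 0)
    (hD1 : D vone = 0)
    (hvac : ∀ (u : V) (n : ℤ), Y vone u n = if n = 0 then u else 0)
    (hcre : ∀ v : V, (∀ n < 0, Y v vone n = 0) ∧ Y v vone 0 = v)
    (hDb : ∀ (v u : V) (n : ℤ),
      D (Y v u n) - Y v (D u) n = ((n : ℂ) + 1) • Y v u (n + 1))
    (hql : ∀ u v : V, ∃ f : MvPolynomial (Fin 2) ℂ, f ≠ 0 ∧
      ∀ w : V, polyAct2 f (fun a b => Y u (Y v w b) a)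
        = polyAct2 f (fun a b => Y v (Y u w a) b)) :
    ∀ u v : V, ∃ k : ℕ, ∀ w : V,
      locOp^[k] (fun a b => Y u (Y v w b) a)
        = locOp^[k] (fun a b => Y v (Y u w a) b) := by
  intro u v
  obtain ⟨f, hf0, hfrel⟩ := hql u v
  obtain ⟨k, g, hfac, hdg⟩ := extract f hf0
  refine ⟨k, ?_⟩
  have hrel : ∀ w : V, polyAct2 ((X 0 - X 1)^k * g) (fun a b => Y u (Y v w b) a)
      = polyAct2 ((X 0 - X 1)^k * g) (fun a b => Y v (Y u w a) b) := by
    intro w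
    rw [← hfac]
    exact hfrel w
  clear hfac hf0 hfrel hql
  suffices H : ∀ (n : ℕ) (g : MvPolynomial (Fin 2) ℂ), (diag g).natDegree ≤ n →
      diag g ≠ 0 →
      (∀ w : V, polyAct2 ((X 0 - X 1)^k * g) (fun a b => Y u (Y v w b) a)
        = polyAct2 ((X 0 - X 1)^k * g) (fun a b => Y v (Y u w a) b)) →
      ∀ w : V, locOp^[k] (fun a b => Y u (Y v w b) a)
        = locOp^[k] (fun a b => Y v (Y u w a) b) from H _ g le_rfl hdg hrel
  intro n
  induction n with
  | zero =>
    intro g hdeg hne hrel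
    by_cases hc : MvPolynomial.coeff 0 g = 0
    · exfalso
      have h0 : (diag g).natDegree = 0 := le_antisymm hdeg (Nat.zero_le _)
      have hCg := Polynomial.eq_C_of_natDegree_eq_zero h0
      rw [const_diag, hc, map_zero] at hCg
      exact hne hCg
    · exact finish_step Y htrunc u v k g hc hrel
  | succ n ihn =>
    intro g hdeg hne hrel
    by_cases hc : MvPolynomial.coeff 0 g = 0
    · have hnd : (diag g).natDegree ≠ 0 := by
        intro h0
        have hCg := Polynomial.eq_C_of_natDegree_eq_zero h0
        rw [const_diag, hc, map_zero] at hCg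
        exact hne hCg
      set g' := pderiv 0 g + pderiv 1 g with hg'
      have hdg' : diag g' = Polynomial.derivative (diag g) := diag_dsum g
      have hne' : diag g' ≠ 0 := by rw [hdg']; exact deriv_ne_zero _ hnd
      have hdeg' : (diag g').natDegree ≤ n := by
        rw [hdg']
        have := Polynomial.natDegree_derivative_lt hnd
        omega
      apply ihn g' hdeg' hne'
      have hcl := closure Y D hDb u v ((X 0 - X 1)^k * g) hrel
      intro w
      have hpd : pderiv 0 ((X 0 - X 1 : MvPolynomial (Fin 2) ℂ)^k * g)
          + pderiv 1 ((X 0 - X 1 : MvPolynomial (Fin 2) ℂ)^k * g) = (X 0 - X 1)^k * g' := by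
        rw [pderiv_mul, pderiv_mul, hg']
        linear_combination g * dsum_t_pow k
      rw [← hpd]
      exact hcl w
    · exact finish_step Y htrunc u v k g hc hrel
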